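/- arXiv:2506.18514 — 5 statements merged into one kernel-verified Lean document; each statement's English description precedes it below -/
import Mathlib

section
/- Let A be an n×n real matrix and B an n×m real matrix with rank(B) = n. If s is an integer with s ≥ max{1, n − rank(A)} and K is an integer with K ≥ ⌈n/s⌉, then there exists an s-sparse actuator schedule S = (S_0, …, S_{K−1}) of length K such that the associated controllability matrix R_S has rank n. -/
open Matrix Submodule Module

variable {n m : ℕ}

private lemma aux_exists_col {b : Fin m → (Fin n → ℝ)}
    (hb : Submodule.span ℝ (Set.range b) = ⊤)
    (g : (Fin n → ℝ) →ₗ[ℝ] (Fin n → ℝ)) (U : Submodule ℝ (Fin n → ℝ))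
    (h : ¬ LinearMap.range g ≤ U) : ∃ j, g (b j) ∉ U := by
  by_contra hc
  push_neg at hc
  apply h
  rw [LinearMap.range_eq_map, ← hb, Submodule.map_span, Submodule.span_le]
  rintro v ⟨u, ⟨j, rfl⟩, rfl⟩
  exact hc j

private lemma aux_dim (U : Submodule ℝ (Fin n → ℝ)) (x : Fin n → ℝ) (hx : x ∉ U) :
    finrank ℝ U + 1 ≤ finrank ℝ (U ⊔ Submodule.span ℝ {x} : Submodule ℝ (Fin n → ℝ)) := by
  have h : U < U ⊔ Submodule.span ℝ {x} := by
    refine lt_of_le_of_ne le_sup_left ?_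
    intro he
    exact hx (he ▸ Submodule.mem_sup_right (Submodule.mem_span_singleton_self x))
  exact Submodule.finrank_lt_finrank_of_lt h

private lemma aux_greedy {b : Fin m → (Fin n → ℝ)}
    (hb : Submodule.span ℝ (Set.range b) = ⊤)
    (g : (Fin n → ℝ) →ₗ[ℝ] (Fin n → ℝ)) (V : Submodule ℝ (Fin n → ℝ)) (t : ℕ)
    (W : Submodule ℝ (Fin n → ℝ)) :
    ∃ T : Finset (Fin m), T.card ≤ t ∧
      (LinearMap.range g ≤ W ⊔ V ⊔ span ℝ ((fun j => g (b j)) '' (T : Set (Fin m))) ∨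
        finrank ℝ (W ⊔ V : Submodule ℝ (Fin n → ℝ)) + t ≤
          finrank ℝ (W ⊔ V ⊔ span ℝ ((fun j => g (b j)) '' (T : Set (Fin m))) :
            Submodule ℝ (Fin n → ℝ))) ∧
      (LinearMap.range g ≤ W ⊔ span ℝ ((fun j => g (b j)) '' (T : Set (Fin m))) ∨
        finrank ℝ W + t ≤
          finrank ℝ (W ⊔ span ℝ ((fun j => g (b j)) '' (T : Set (Fin m))) :
            Submodule ℝ (Fin n → ℝ))) := by
  induction t generalizing W with
  | zero =>
    refine ⟨∅, le_rfl, ?_, ?_⟩ <;>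
    · right
      simpa using Submodule.finrank_mono (le_sup_left : _ ≤ _ ⊔ span ℝ ((fun j => g (b j)) '' ((∅ : Finset (Fin m)) : Set (Fin m))))
  | succ t ih =>
    by_cases hA : ∃ j, g (b j) ∉ W ⊔ V
    · obtain ⟨j, hj⟩ := hA
      obtain ⟨T', hcard, c1, c2⟩ := ih (W ⊔ span ℝ {g (b j)})
      set x := g (b j) with hx
      set St := span ℝ ((fun j => g (b j)) '' ((T' : Finset (Fin m)) : Set (Fin m))) with hSt
      have hS : span ℝ ((fun j => g (b j)) '' ((insert j T' : Finset (Fin m)) : Set (Fin m)))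
          = span ℝ {x} ⊔ St := by
        rw [Finset.coe_insert, Set.image_insert_eq, Submodule.span_insert]
      refine ⟨insert j T', (Finset.card_insert_le _ _).trans (by omega), ?_, ?_⟩
      · rw [hS]
        have e1 : W ⊔ V ⊔ (span ℝ {x} ⊔ St) = W ⊔ V ⊔ span ℝ {x} ⊔ St := by ac_rfl
        have e3 : W ⊔ span ℝ {x} ⊔ V = W ⊔ V ⊔ span ℝ {x} := by ac_rfl
        rw [e1]
        have e4 : W ⊔ span ℝ {x} ⊔ V ⊔ St = W ⊔ V ⊔ span ℝ {x} ⊔ St := by ac_rfl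
        rcases c1 with hl | hr
        · left; exact e4 ▸ hl
        · right
          have hd := aux_dim (W ⊔ V) x hj
          rw [e3] at hr
          omega
      · rw [hS]
        have e2 : W ⊔ (span ℝ {x} ⊔ St) = W ⊔ span ℝ {x} ⊔ St := by ac_rfl
        rw [e2]
        rcases c2 with hl | hr
        · left; exact hl
        · right
          have hj' : x ∉ W := fun h => hj (Submodule.mem_sup_left h)
          have hd := aux_dim W x hj'
          omega
    · have hle : LinearMap.range g ≤ W ⊔ V := by
        by_contra h
        exact hA (aux_exists_col hb g _ h)
      by_cases hB : ∃ j, g (b j) ∉ W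
      · obtain ⟨j, hj⟩ := hB
        obtain ⟨T', hcard, _, c2⟩ := ih (W ⊔ span ℝ {g (b j)})
        set x := g (b j) with hx
        set St := span ℝ ((fun j => g (b j)) '' ((T' : Finset (Fin m)) : Set (Fin m))) with hSt
        have hS : span ℝ ((fun j => g (b j)) '' ((insert j T' : Finset (Fin m)) : Set (Fin m)))
            = span ℝ {x} ⊔ St := by
          rw [Finset.coe_insert, Set.image_insert_eq, Submodule.span_insert]
        refine ⟨insert j T', (Finset.card_insert_le _ _).trans (by omega), ?_, ?_⟩
        · left
          exact hle.trans (le_sup_left : W ⊔ V ≤ W ⊔ V ⊔ _)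
        · rw [hS]
          have e2 : W ⊔ (span ℝ {x} ⊔ St) = W ⊔ span ℝ {x} ⊔ St := by ac_rfl
          rw [e2]
          rcases c2 with hl | hr
          · left; exact hl
          · right
            have hd := aux_dim W x hj
            omega
      · push_neg at hB
        have hle' : LinearMap.range g ≤ W := by
          by_contra h
          obtain ⟨j, hj⟩ := aux_exists_col hb g W h
          exact hj (hB j)
        refine ⟨∅, by simp, ?_, ?_⟩
        · left; exact hle.trans (le_sup_left : W ⊔ V ≤ W ⊔ V ⊔ _)
        · left; exact hle'.trans (le_sup_left : W ≤ W ⊔ _)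

private noncomputable def WT (f : (Fin n → ℝ) →ₗ[ℝ] (Fin n → ℝ)) (b : Fin m → (Fin n → ℝ))
    (T : ℕ → Finset (Fin m)) (j : ℕ) : Submodule ℝ (Fin n → ℝ) :=
  (Finset.range j).sup fun i => span ℝ ((fun x => (f ^ i) (b x)) '' (T i : Set (Fin m)))

private lemma aux_chain (f : (Fin n → ℝ) →ₗ[ℝ] (Fin n → ℝ)) (X : Submodule ℝ (Fin n → ℝ)) :
    finrank ℝ X ≤ finrank ℝ (X.map f) + finrank ℝ (LinearMap.ker f) := by
  set g := f ∘ₗ X.subtype with hg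
  have h1 : finrank ℝ (LinearMap.range g) + finrank ℝ (LinearMap.ker g) = finrank ℝ X :=
    LinearMap.finrank_range_add_finrank_ker g
  have h2 : LinearMap.range g = X.map f := by
    rw [hg, LinearMap.range_comp, Submodule.range_subtype]
  have h3 : finrank ℝ (LinearMap.ker g) ≤ finrank ℝ (LinearMap.ker f) := by
    have hk : LinearMap.ker g = Submodule.comap X.subtype (LinearMap.ker f) :=
      LinearMap.ker_comp _ _
    calc finrank ℝ (LinearMap.ker g)
        = finrank ℝ ((LinearMap.ker g).map X.subtype) :=
          (Submodule.finrank_map_subtype_eq X _).symm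
      _ ≤ finrank ℝ (LinearMap.ker f) := by
          have hm : (LinearMap.ker g).map X.subtype = X ⊓ LinearMap.ker f := by
            rw [hk]; exact Submodule.map_comap_subtype X _
          rw [hm]; exact Submodule.finrank_mono inf_le_right
  rw [h2] at h1
  omega

private lemma aux_stages (f : (Fin n → ℝ) →ₗ[ℝ] (Fin n → ℝ)) {b : Fin m → (Fin n → ℝ)}
    (hb : Submodule.span ℝ (Set.range b) = ⊤) (s : ℕ)
    (hker : finrank ℝ (LinearMap.ker f) ≤ s) (j : ℕ) :
    ∃ T : ℕ → Finset (Fin m), (∀ i, (T i).card ≤ s) ∧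
      WT f b T j ⊔ LinearMap.range (f ^ j) = ⊤ ∧
      min n (j * s) ≤ finrank ℝ (WT f b T j) := by
  induction j with
  | zero =>
    refine ⟨fun _ => ∅, fun _ => by simp, ?_, by simp⟩
    have h1 : LinearMap.range ((f ^ 0 : (Fin n → ℝ) →ₗ[ℝ] (Fin n → ℝ))) = ⊤ :=
      LinearMap.range_eq_top.2 fun x => ⟨x, by simp [pow_zero]⟩
    rw [h1, sup_top_eq]
  | succ j ih =>
    obtain ⟨T, hcard, hinv1, hinv2⟩ := ih
    set W := WT f b T j with hW
    set G := LinearMap.range (f ^ j) with hG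
    set H := LinearMap.range (f ^ (j + 1)) with hH
    have hHG : H ≤ G := by
      rw [hH, hG, pow_succ, Module.End.mul_eq_comp]
      exact LinearMap.range_comp_le_range _ _
    have hmap : H = G.map f := by
      rw [hH, hG, pow_succ', Module.End.mul_eq_comp, LinearMap.range_comp]
    have e1 : finrank ℝ (W ⊔ G : Submodule ℝ (Fin n → ℝ)) +
        finrank ℝ (W ⊓ G : Submodule ℝ (Fin n → ℝ)) = finrank ℝ W + finrank ℝ G :=
      Submodule.finrank_sup_add_finrank_inf_eq W G
    have e2 : finrank ℝ (W ⊔ H : Submodule ℝ (Fin n → ℝ)) +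
        finrank ℝ (W ⊓ H : Submodule ℝ (Fin n → ℝ)) = finrank ℝ W + finrank ℝ H :=
      Submodule.finrank_sup_add_finrank_inf_eq W H
    have e3 : finrank ℝ (W ⊓ H : Submodule ℝ (Fin n → ℝ)) ≤
        finrank ℝ (W ⊓ G : Submodule ℝ (Fin n → ℝ)) :=
      Submodule.finrank_mono (inf_le_inf_left W hHG)
    have e4 : finrank ℝ (W ⊔ G : Submodule ℝ (Fin n → ℝ)) = n := by
      rw [hinv1, finrank_top, Module.finrank_fin_fun]
    have e5 : finrank ℝ G ≤ finrank ℝ H + s := by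
      have h := aux_chain f G
      rw [← hmap] at h
      omega
    have hbound : n ≤ finrank ℝ (W ⊔ H : Submodule ℝ (Fin n → ℝ)) + s := by omega
    obtain ⟨Tn, hcn, c1, c2⟩ := aux_greedy hb (f ^ j) H s W
    set S := span ℝ ((fun x => (f ^ j) (b x)) '' (Tn : Set (Fin m))) with hS
    refine ⟨Function.update T j Tn, ?_, ?_, ?_⟩
    · intro i
      by_cases hi : i = j
      · subst hi; rw [Function.update_self]; exact hcn
      · rw [Function.update_of_ne hi]; exact hcard i
    all_goals
      have hWnew : WT f b (Function.update T j Tn) (j + 1) = W ⊔ S := by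
        rw [WT, Finset.range_add_one, Finset.sup_insert]
        have h2 : ((Finset.range j).sup fun i =>
            span ℝ ((fun x => (f ^ i) (b x)) '' ((Function.update T j Tn i : Finset (Fin m)) : Set (Fin m)))) = W := by
          rw [hW, WT]
          refine Finset.sup_congr rfl fun i hi => ?_
          rw [Function.update_of_ne (Nat.ne_of_lt (Finset.mem_range.mp hi))]
        rw [h2, Function.update_self, ← hS]
        exact sup_comm _ _
    · rw [hWnew]
      rcases c1 with hl | hr
      · rw [eq_top_iff, ← hinv1]
        apply sup_le
        · exact le_sup_of_le_left le_sup_left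
        · have e6 : W ⊔ H ⊔ S = W ⊔ S ⊔ H := by ac_rfl
          exact (e6 ▸ hl).trans le_rfl
      · have htop : W ⊔ H ⊔ S = ⊤ := by
          apply Submodule.eq_top_of_finrank_eq
          have hle : finrank ℝ (W ⊔ H ⊔ S : Submodule ℝ (Fin n → ℝ)) ≤ n := by
            have := Submodule.finrank_le (W ⊔ H ⊔ S : Submodule ℝ (Fin n → ℝ))
            rwa [Module.finrank_fin_fun] at this
          rw [Module.finrank_fin_fun]
          omega
        have e6 : W ⊔ S ⊔ H = W ⊔ H ⊔ S := by ac_rfl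
        rw [e6, htop]
    · rw [hWnew]
      rcases c2 with hl | hr
      · have htop : W ⊔ S = ⊤ := by
          rw [eq_top_iff, ← hinv1]
          exact sup_le le_sup_left hl
        rw [htop, finrank_top, Module.finrank_fin_fun]
        exact min_le_left _ _
      · have hmul : (j + 1) * s = j * s + s := by ring
        rw [hmul]
        have h2 := hinv2
        generalize j * s = a at h2 ⊢
        omega

private lemma aux_pow (A : Matrix (Fin n) (Fin n) ℝ) (p : ℕ) :
    (A ^ p).mulVecLin = A.mulVecLin ^ p := by
  induction p with
  | zero => rw [pow_zero, pow_zero]; exact Matrix.mulVecLin_one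
  | succ p ih =>
    rw [pow_succ, pow_succ, Matrix.mulVecLin_mul, ih, Module.End.mul_eq_comp]

/-- If `rank B = n`, `s ≥ max {1, n - rank A}`, and `K ≥ ⌈n/s⌉`, then there exists an
`s`-sparse actuator schedule `S = (S_0, ..., S_{K-1})` (subsets of actuator indices with
`|S_k| ≤ s`) whose controllability matrix
`R_S = [A^{K-1} B_{S_0}, A^{K-2} B_{S_1}, ..., B_{S_{K-1}}]` has rank `n`. -/
theorem stmt_1 {n m : ℕ} (A : Matrix (Fin n) (Fin n) ℝ) (B : Matrix (Fin n) (Fin m) ℝ)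
    (hB : B.rank = n) (s K : ℕ) (hs : max 1 (n - A.rank) ≤ s)
    (hK : (⌈(n : ℚ) / (s : ℚ)⌉ : ℤ) ≤ (K : ℤ)) :
    ∃ S : Fin K → Finset (Fin m), (∀ k : Fin K, (S k).card ≤ s) ∧
      Matrix.rank (Matrix.of fun (i : Fin n) (q : Σ k : Fin K, {j : Fin m // j ∈ S k}) =>
        (A ^ (K - 1 - (q.1 : ℕ)) * B) i q.2.val) = n := by
  rcases Nat.eq_zero_or_pos n with hn | hn
  · subst hn
    refine ⟨fun _ => ∅, fun _ => by simp, ?_⟩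
    have h := Matrix.rank_le_card_height (Matrix.of fun (i : Fin 0)
      (q : Σ k : Fin K, {j : Fin m // j ∈ (∅ : Finset (Fin m))}) =>
        (A ^ (K - 1 - (q.1 : ℕ)) * B) i q.2.val)
    simpa using h
  · have hs1 : 1 ≤ s := le_trans (le_max_left _ _) hs
    have hsd : n - A.rank ≤ s := le_trans (le_max_right _ _) hs
    have hKs : n ≤ K * s := by
      have h1 : ((n : ℚ) / (s : ℚ)) ≤ (K : ℚ) := by
        calc ((n : ℚ) / (s : ℚ)) ≤ ((⌈(n : ℚ) / (s : ℚ)⌉ : ℚ)) := Int.le_ceil _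
          _ ≤ K := by exact_mod_cast hK
      have hs0 : (0 : ℚ) < (s : ℚ) := by exact_mod_cast hs1
      rw [div_le_iff₀ hs0] at h1
      exact_mod_cast h1
    have hK1 : 1 ≤ K := by
      rcases Nat.eq_zero_or_pos K with h | h
      · subst h; simp at hKs; omega
      · exact h
    set f := A.mulVecLin with hf
    set b : Fin m → (Fin n → ℝ) := fun j => Bᵀ j with hbdef
    have hb : Submodule.span ℝ (Set.range b) = ⊤ := by
      apply Submodule.eq_top_of_finrank_eq
      rw [Module.finrank_fin_fun]
      rw [Matrix.rank_eq_finrank_span_cols] at hB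
      exact hB
    have hker : finrank ℝ (LinearMap.ker f) ≤ s := by
      have h1 : finrank ℝ (LinearMap.range f) + finrank ℝ (LinearMap.ker f)
          = finrank ℝ (Fin n → ℝ) := LinearMap.finrank_range_add_finrank_ker f
      rw [Module.finrank_fin_fun] at h1
      have h2 : A.rank = finrank ℝ (LinearMap.range f) := rfl
      omega
    obtain ⟨T, hcard, hinv1, hinv2⟩ := aux_stages f hb s hker K
    have hWtop : WT f b T K = ⊤ := by
      apply Submodule.eq_top_of_finrank_eq
      rw [Module.finrank_fin_fun]
      have hm : min n (K * s) = n := min_eq_left hKs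
      rw [hm] at hinv2
      refine le_antisymm ?_ hinv2
      have h := Submodule.finrank_le (WT f b T K)
      rwa [Module.finrank_fin_fun] at h
    refine ⟨fun k => T (K - 1 - (k : ℕ)), fun k => hcard _, ?_⟩
    rw [Matrix.rank_eq_finrank_span_cols]
    have hspan : Submodule.span ℝ (Set.range (Matrix.of fun (i : Fin n)
        (q : Σ k : Fin K, {j : Fin m // j ∈ T (K - 1 - (k : ℕ))}) =>
          (A ^ (K - 1 - (q.1 : ℕ)) * B) i q.2.val)ᵀ) = ⊤ := by
      rw [eq_top_iff, ← hWtop, WT]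
      apply Finset.sup_le
      intro i hi
      rw [Submodule.span_le]
      rintro v ⟨x, hx, rfl⟩
      apply Submodule.subset_span
      have hiK : i < K := Finset.mem_range.mp hi
      have hii : K - 1 - (K - 1 - i) = i := by omega
      refine ⟨⟨⟨K - 1 - i, by omega⟩, ⟨x, ?_⟩⟩, ?_⟩
      · show x ∈ T (K - 1 - (K - 1 - i))
        rw [hii]; exact hx
      · funext i'
        show (A ^ (K - 1 - (K - 1 - i)) * B) i' x = (f ^ i) (b x) i'
        rw [hii, hf, ← aux_pow]
        simp [Matrix.mulVecLin, Matrix.mul_apply, Matrix.mulVec, dotProduct, hbdef]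
    rw [Matrix.col_def, hspan, finrank_top, Module.finrank_fin_fun]
end

section
/- Let A be an n×n real matrix and B an n×m real matrix with rank(B) = n, let s be an integer with s ≥ max{1, n − rank(A)}, and let K be an integer with K ≥ ⌈n/s⌉. Then for every x_0, x_f ∈ ℝⁿ there exist input vectors u(0), …, u(K−1) ∈ ℝ^m, each having at most s nonzero entries, such that the state sequence defined by x(0) = x_0 and x(k+1) = A x(k) + B u(k) for k = 0, …, K−1 satisfies x(K) = x_f. -/
open Matrix

section Aux

open Module Submodule LinearMap

private lemma finrank_le_map_add_ker {E : Type*} [AddCommGroup E] [Module ℝ E]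
    [FiniteDimensional ℝ E] (g : E →ₗ[ℝ] E) (W : Submodule ℝ E) :
    finrank ℝ W ≤ finrank ℝ (W.map g) + finrank ℝ (ker g) := by
  have h1 := LinearMap.finrank_range_add_finrank_ker (g.domRestrict W)
  rw [LinearMap.range_domRestrict] at h1
  have h2 : finrank ℝ (ker (g.domRestrict W)) ≤ finrank ℝ (ker g) := by
    apply LinearMap.finrank_le_finrank_of_injective
      (f := (W.subtype ∘ₗ (ker (g.domRestrict W)).subtype).codRestrict (ker g) ?_) ?_
    · intro x
      have hx := x.2
      rw [LinearMap.mem_ker, LinearMap.domRestrict_apply] at hx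
      rw [LinearMap.mem_ker]
      exact hx
    · intro a b hab
      have h3 := congrArg Subtype.val hab
      simp only [LinearMap.codRestrict_apply, LinearMap.comp_apply,
        Submodule.coe_subtype] at h3
      exact Subtype.ext (Subtype.ext h3)
  omega

private lemma greedy_lemma {n m : ℕ} (f : Fin m → (Fin n → ℝ)) (c : ℕ)
    (V : Submodule ℝ (Fin n → ℝ)) :
    ∃ I : Finset (Fin m), I.card ≤ c ∧
      min (finrank ℝ (V ⊔ span ℝ (Set.range f) : Submodule ℝ (Fin n → ℝ)))
          (finrank ℝ V + c)
        ≤ finrank ℝ (V ⊔ span ℝ (f '' ↑I) : Submodule ℝ (Fin n → ℝ)) := by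
  induction c with
  | zero =>
    refine ⟨∅, le_refl 0, ?_⟩
    refine le_trans (min_le_right _ _) (le_of_eq ?_)
    rw [Finset.coe_empty, Set.image_empty, Submodule.span_empty, sup_bot_eq, add_zero]
  | succ c ih =>
    obtain ⟨I, hIc, hIr⟩ := ih
    by_cases h : (V ⊔ span ℝ (f '' ↑I) : Submodule ℝ (Fin n → ℝ)) = V ⊔ span ℝ (Set.range f)
    · refine ⟨I, hIc.trans (Nat.le_succ c), ?_⟩
      rw [h]
      exact min_le_left _ _
    · have hle : (V ⊔ span ℝ (f '' ↑I) : Submodule ℝ (Fin n → ℝ)) ≤ V ⊔ span ℝ (Set.range f) :=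
        sup_le_sup_left (span_mono (Set.image_subset_range f ↑I)) V
      have hj : ∃ j, f j ∉ (V ⊔ span ℝ (f '' ↑I) : Submodule ℝ (Fin n → ℝ)) := by
        by_contra hc
        push_neg at hc
        refine h (le_antisymm hle (sup_le le_sup_left ?_))
        rw [span_le]
        rintro x ⟨j, rfl⟩
        exact hc j
      obtain ⟨j, hj⟩ := hj
      refine ⟨insert j I, ?_, ?_⟩
      · exact (Finset.card_insert_le j I).trans (Nat.succ_le_succ hIc)
      · have hmem : f j ∈ (V ⊔ span ℝ (f '' ↑(insert j I)) : Submodule ℝ (Fin n → ℝ)) := by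
          apply Submodule.mem_sup_right
          apply subset_span
          exact ⟨j, by simp, rfl⟩
        have hlt2 : (V ⊔ span ℝ (f '' ↑I) : Submodule ℝ (Fin n → ℝ))
            < V ⊔ span ℝ (f '' ↑(insert j I)) := by
          refine lt_of_le_of_ne (sup_le_sup_left (span_mono (Set.image_mono (by simp))) V) ?_
          intro he
          rw [← he] at hmem
          exact hj hmem
        have h1 := Submodule.finrank_lt_finrank_of_lt hlt2
        have h2 : finrank ℝ (V ⊔ span ℝ (f '' ↑(insert j I)) : Submodule ℝ (Fin n → ℝ))
            ≤ finrank ℝ (V ⊔ span ℝ (Set.range f) : Submodule ℝ (Fin n → ℝ)) :=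
          Submodule.finrank_mono
            (sup_le_sup_left (span_mono (Set.image_subset_range f _)) V)
        rcases le_or_gt (finrank ℝ (V ⊔ span ℝ (Set.range f) : Submodule ℝ (Fin n → ℝ)))
          (finrank ℝ V + c) with hab | hab
        · rw [min_eq_left hab] at hIr
          rw [min_eq_left (by omega)]
          omega
        · rw [min_eq_right hab.le] at hIr
          exact le_trans (min_le_right _ _) (by omega)

private lemma rank_pow_ge {n : ℕ} (A : Matrix (Fin n) (Fin n) ℝ) (s : ℕ)
    (hd : n - A.rank ≤ s) : ∀ k : ℕ, n - k * s ≤ (A ^ k).rank := by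
  have hker : finrank ℝ (ker A.mulVecLin) = n - A.rank := by
    have h1 := LinearMap.finrank_range_add_finrank_ker A.mulVecLin
    rw [Module.finrank_fin_fun] at h1
    have : A.rank = finrank ℝ (range A.mulVecLin) := rfl
    omega
  intro k
  induction k with
  | zero => simp [pow_zero]
  | succ k ih =>
    have hstep : (A ^ k).rank ≤ (A ^ (k + 1)).rank + (n - A.rank) := by
      have hmap := finrank_le_map_add_ker A.mulVecLin (range (A ^ k).mulVecLin)
      have heq : (range ((A ^ k).mulVecLin)).map A.mulVecLin
          = range ((A ^ (k + 1)).mulVecLin) := by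
        rw [pow_succ', Matrix.mulVecLin_mul, LinearMap.range_comp]
      rw [heq, hker] at hmap
      exact hmap
    have hr : (A ^ k).rank ≥ n - k * s := ih
    have : n - A.rank ≤ s := hd
    rw [Nat.succ_mul]
    omega

end Aux

section Key

open Module Submodule LinearMap

private lemma key_lemma {n m : ℕ} (A : Matrix (Fin n) (Fin n) ℝ)
    (B : Matrix (Fin n) (Fin m) ℝ) (hBtop : range B.mulVecLin = ⊤) (s : ℕ)
    (hd : n - A.rank ≤ s) (K : ℕ) (hn : n ≤ K * s) :
    ∀ t, t ≤ K → ∃ V : Submodule ℝ (Fin n → ℝ), n - (K - t) * s ≤ finrank ℝ V ∧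
      ∀ v ∈ V, ∃ w : Fin K → Fin m → ℝ,
        (∀ k : Fin K, (Finset.univ.filter fun j : Fin m => w k j ≠ 0).card ≤ s) ∧
        (∀ k : Fin K, (k : ℕ) < K - t → w k = 0) ∧
        ∑ k : Fin K, (A ^ (k : ℕ)).mulVec (B.mulVec (w k)) = v := by
  intro t
  induction t with
  | zero =>
    intro _
    refine ⟨⊥, by simpa using by omega, ?_⟩
    intro v hv
    rw [Submodule.mem_bot] at hv
    subst hv
    exact ⟨0, fun k => by simp, fun k _ => rfl, by simp⟩
  | succ t ih =>
    intro ht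
    obtain ⟨V, hV, hVmem⟩ := ih (by omega)
    set k₀ : ℕ := K - (t + 1) with hk₀
    have hk₀K : k₀ < K := by omega
    have hKt : K - t = k₀ + 1 := by omega
    set f : Fin m → (Fin n → ℝ) := fun j => (A ^ k₀).mulVec (Bᵀ j) with hf
    obtain ⟨I, hIc, hIr⟩ := greedy_lemma f s V
    have hspan : span ℝ (Set.range f) = range ((A ^ k₀).mulVecLin ∘ₗ B.mulVecLin) := by
      have h1 : Set.range f = (A ^ k₀).mulVecLin '' Set.range B.col := by
        rw [← Set.range_comp]
        rfl
      rw [h1, Submodule.span_image, ← Matrix.range_mulVecLin, LinearMap.range_comp]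
    have hfullrank : (A ^ k₀).rank ≤ finrank ℝ (span ℝ (Set.range f)) := by
      rw [hspan, LinearMap.range_comp, hBtop, Submodule.map_top]
      exact le_of_eq rfl
    have hrk := rank_pow_ge A s hd k₀
    -- finrank of V ⊔ span(f '' I) ≥ n - k₀ * s
    have hnew : n - k₀ * s ≤ finrank ℝ (V ⊔ span ℝ (f '' ↑I) : Submodule ℝ (Fin n → ℝ)) := by
      refine le_trans ?_ hIr
      have h2 : finrank ℝ (span ℝ (Set.range f))
          ≤ finrank ℝ (V ⊔ span ℝ (Set.range f) : Submodule ℝ (Fin n → ℝ)) :=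
        Submodule.finrank_mono le_sup_right
      rw [hKt] at hV
      rw [le_min_iff]
      constructor
      · omega
      · rw [Nat.succ_mul] at hV
        omega
    refine ⟨V ⊔ span ℝ (f '' ↑I), by rwa [hk₀] at hnew, ?_⟩
    intro v hv
    rw [Submodule.mem_sup] at hv
    obtain ⟨v₁, hv₁, v₂, hv₂, rfl⟩ := hv
    obtain ⟨w, hw₁, hw₂, hw₃⟩ := hVmem v₁ hv₁
    rw [Finsupp.mem_span_image_iff_linearCombination] at hv₂
    obtain ⟨l, hlsupp, hlv⟩ := hv₂
    set c : Fin m → ℝ := fun j => l j with hc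
    have hcsparse : (Finset.univ.filter fun j : Fin m => c j ≠ 0).card ≤ s := by
      refine le_trans (Finset.card_le_card ?_) hIc
      intro j hjmem
      rw [Finset.mem_filter] at hjmem
      have : j ∈ l.support := Finsupp.mem_support_iff.mpr hjmem.2
      exact hlsupp this
    have hv₂eq : (A ^ k₀).mulVec (B.mulVec c) = v₂ := by
      rw [← hlv, Finsupp.linearCombination_apply, Finsupp.sum_fintype _ _ (by simp)]
      have hB : B.mulVec c = ∑ j, c j • Bᵀ j := by
        funext i
        simp [Matrix.mulVec, dotProduct, Finset.sum_apply, mul_comm]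
      rw [hB]
      have : (A ^ k₀).mulVec (∑ j, c j • Bᵀ j)
          = ∑ j, c j • (A ^ k₀).mulVec (Bᵀ j) := by
        rw [show (A ^ k₀).mulVec (∑ j, c j • Bᵀ j)
            = (A ^ k₀).mulVecLin (∑ j, c j • Bᵀ j) from rfl]
        rw [map_sum]
        simp [Matrix.mulVecLin_apply]
      rw [this]
    set K₀ : Fin K := ⟨k₀, hk₀K⟩ with hK₀
    have hwk₀ : w K₀ = 0 := hw₂ K₀ (by simp [hK₀]; omega)
    refine ⟨Function.update w K₀ c, ?_, ?_, ?_⟩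
    · intro k
      by_cases hk : k = K₀
      · subst hk; rw [Function.update_self]; exact hcsparse
      · rw [Function.update_of_ne hk]; exact hw₁ k
    · intro k hkK
      have hkne : k ≠ K₀ := by
        intro he
        rw [he] at hkK
        have hKv : (K₀ : ℕ) = k₀ := rfl
        omega
      rw [Function.update_of_ne hkne]
      exact hw₂ k (by omega)
    · have hpt : ∀ k : Fin K,
          (A ^ (k : ℕ)).mulVec (B.mulVec (Function.update w K₀ c k))
          = (A ^ (k : ℕ)).mulVec (B.mulVec (w k))
            + (if k = K₀ then (A ^ k₀).mulVec (B.mulVec c) else 0) := by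
        intro k
        by_cases hk : k = K₀
        · subst hk
          rw [Function.update_self, if_pos rfl, hwk₀]
          simp [hK₀]
        · rw [Function.update_of_ne hk, if_neg hk, add_zero]
      rw [Finset.sum_congr rfl fun k _ => hpt k, Finset.sum_add_distrib, hw₃,
        Finset.sum_ite_eq' Finset.univ K₀, if_pos (Finset.mem_univ K₀), hv₂eq]

end Key

/-- If `rank B = n`, `s ≥ max {1, n - rank A}`, and `K ≥ ⌈n/s⌉`, then for every pair of
states `x₀, x_f ∈ ℝⁿ` there exist `s`-sparse inputs `u(0), ..., u(K-1)` driving the system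
`x(k+1) = A x(k) + B u(k)` from `x(0) = x₀` to `x(K) = x_f`. -/
theorem stmt_2 {n m : ℕ} (A : Matrix (Fin n) (Fin n) ℝ) (B : Matrix (Fin n) (Fin m) ℝ)
    (hB : B.rank = n) (s K : ℕ) (hs : max 1 (n - A.rank) ≤ s)
    (hK : (⌈(n : ℚ) / (s : ℚ)⌉ : ℤ) ≤ (K : ℤ)) :
    ∀ x₀ xf : Fin n → ℝ, ∃ u : Fin K → Fin m → ℝ,
      (∀ k : Fin K, (Finset.univ.filter fun j : Fin m => u k j ≠ 0).card ≤ s) ∧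
      ∃ x : ℕ → Fin n → ℝ, x 0 = x₀ ∧
        (∀ k : Fin K, x ((k : ℕ) + 1) = A.mulVec (x k) + B.mulVec (u k)) ∧
        x K = xf := by
  intro x₀ xf
  have hs1 : 1 ≤ s := le_trans (le_max_left _ _) hs
  have hd : n - A.rank ≤ s := le_trans (le_max_right _ _) hs
  have hn : n ≤ K * s := by
    have h1 := Int.le_ceil ((n : ℚ) / (s : ℚ))
    have hsQ : (0 : ℚ) < (s : ℚ) := by exact_mod_cast hs1
    have h2 : ((⌈(n : ℚ) / (s : ℚ)⌉ : ℤ) : ℚ) ≤ ((K : ℤ) : ℚ) := by exact_mod_cast hK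
    have h3 : (n : ℚ) / (s : ℚ) ≤ (K : ℚ) := by
      refine le_trans h1 ?_
      exact_mod_cast h2
    rw [div_le_iff₀ hsQ] at h3
    exact_mod_cast h3
  have hBtop : LinearMap.range B.mulVecLin = ⊤ := by
    apply Submodule.eq_top_of_finrank_eq
    rw [Module.finrank_fin_fun]
    exact hB
  obtain ⟨V, hVrank, hVmem⟩ := key_lemma A B hBtop s hd K hn K (le_refl K)
  have hVtop : V = ⊤ := by
    apply Submodule.eq_top_of_finrank_eq
    have h4 : Module.finrank ℝ V ≤ Module.finrank ℝ (Fin n → ℝ) := V.finrank_le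
    rw [Module.finrank_fin_fun] at h4 ⊢
    simp only [Nat.sub_self, Nat.zero_mul, Nat.sub_zero] at hVrank
    omega
  obtain ⟨w, hw₁, -, hw₃⟩ := hVmem (xf - (A ^ K).mulVec x₀) (hVtop ▸ Submodule.mem_top)
  set u : Fin K → Fin m → ℝ := fun k => w k.rev with hu
  refine ⟨u, fun k => hw₁ k.rev, ?_⟩
  refine ⟨fun j => (A ^ j).mulVec x₀ +
      ∑ i : Fin K, if (i : ℕ) < j then (A ^ (j - 1 - (i : ℕ))).mulVec (B.mulVec (u i)) else 0,
    ?_, ?_, ?_⟩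
  · simp [Matrix.one_mulVec]
  · intro k
    beta_reduce
    have hmulsum : ∀ g : Fin K → (Fin n → ℝ),
        A.mulVec (∑ i : Fin K, g i) = ∑ i : Fin K, A.mulVec (g i) := by
      intro g
      rw [show A.mulVec (∑ i : Fin K, g i) = A.mulVecLin (∑ i : Fin K, g i) from rfl,
        map_sum]
      simp [Matrix.mulVecLin_apply]
    rw [Matrix.mulVec_add, hmulsum, Matrix.mulVec_mulVec, ← pow_succ']
    have hR : ∀ i : Fin K,
        A.mulVec (if (i : ℕ) < (k : ℕ) then
            (A ^ ((k : ℕ) - 1 - (i : ℕ))).mulVec (B.mulVec (u i)) else 0)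
        = (if (i : ℕ) < (k : ℕ) then
            (A ^ ((k : ℕ) - (i : ℕ))).mulVec (B.mulVec (u i)) else 0) := by
      intro i
      by_cases h1 : (i : ℕ) < (k : ℕ)
      · rw [if_pos h1, if_pos h1, Matrix.mulVec_mulVec, ← pow_succ',
          show ((k : ℕ) - 1 - (i : ℕ)) + 1 = (k : ℕ) - (i : ℕ) by omega]
      · rw [if_neg h1, if_neg h1, Matrix.mulVec_zero]
    rw [Finset.sum_congr rfl fun i _ => hR i]
    have hL : ∀ i : Fin K,
        (if (i : ℕ) < (k : ℕ) + 1 then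
            (A ^ ((k : ℕ) + 1 - 1 - (i : ℕ))).mulVec (B.mulVec (u i)) else 0)
        = (if (i : ℕ) < (k : ℕ) then
            (A ^ ((k : ℕ) - (i : ℕ))).mulVec (B.mulVec (u i)) else 0)
          + (if i = k then B.mulVec (u i) else 0) := by
      intro i
      by_cases h1 : (i : ℕ) < (k : ℕ)
      · rw [if_pos (by omega), if_pos h1, if_neg (fun he => by
          rw [he] at h1; omega), add_zero,
          show (k : ℕ) + 1 - 1 - (i : ℕ) = (k : ℕ) - (i : ℕ) by omega]
      · by_cases h2 : i = k
        · subst h2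
          rw [if_pos (by omega), if_neg h1, if_pos rfl, zero_add,
            show (i : ℕ) + 1 - 1 - (i : ℕ) = 0 by omega, pow_zero, Matrix.one_mulVec]
        · have h3 : (i : ℕ) ≠ (k : ℕ) := fun he => h2 (Fin.ext he)
          rw [if_neg (by omega), if_neg h1, if_neg h2, add_zero]
    rw [Finset.sum_congr rfl fun i _ => hL i, Finset.sum_add_distrib,
      Finset.sum_ite_eq' Finset.univ k, if_pos (Finset.mem_univ k), add_assoc]
  · beta_reduce
    have hall : ∀ i : Fin K,
        (if (i : ℕ) < K then (A ^ (K - 1 - (i : ℕ))).mulVec (B.mulVec (u i)) else 0)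
        = (A ^ ((i.rev : ℕ))).mulVec (B.mulVec (w i.rev)) := by
      intro i
      rw [if_pos i.isLt, Fin.val_rev,
        show K - 1 - (i : ℕ) = K - ((i : ℕ) + 1) by omega]
    rw [Finset.sum_congr rfl fun i _ => hall i]
    have hsum : ∑ i : Fin K, (A ^ ((i.rev : ℕ))).mulVec (B.mulVec (w i.rev))
        = ∑ j : Fin K, (A ^ ((j : ℕ))).mulVec (B.mulVec (w j)) :=
      Fintype.sum_equiv Fin.revPerm _ _ (fun i => rfl)
    rw [hsum, hw₃, add_sub_cancel]
end

section
/- Let W_0 be an n×n real symmetric positive definite matrix, let V be a finite index set, and let v : V → ℝⁿ. For T ⊆ V define W(T) = W_0 + Σ_{e∈T} v_e v_eᵀ and E(T) = trace(W(T)⁻¹), and set α = λ_min(W_0)/λ_max(W(V)), where λ_min and λ_max denote the smallest and largest eigenvalues. Then α > 0, and for all sets T_A ⊆ T_B ⊆ V and every e ∈ V \ T_B, the supermodularity inequality E(T_A) − E(T_A ∪ {e}) ≥ α · (E(T_B) − E(T_B ∪ {e})) holds. -/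
open Matrix Finset

lemma aux_mul_vecMulVec {n : ℕ} (M : Matrix (Fin n) (Fin n) ℝ) (a b : Fin n → ℝ) :
    M * vecMulVec a b = vecMulVec (M *ᵥ a) b := by
  ext i j
  simp only [mul_apply, vecMulVec_apply, mulVec, dotProduct, Finset.sum_mul]
  exact Finset.sum_congr rfl fun k _ => by ring

lemma aux_vecMulVec_mul {n : ℕ} (a b : Fin n → ℝ) (M : Matrix (Fin n) (Fin n) ℝ) :
    vecMulVec a b * M = vecMulVec a (b ᵥ* M) := by
  ext i j
  simp only [mul_apply, vecMulVec_apply, vecMul, dotProduct, Finset.mul_sum]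
  exact Finset.sum_congr rfl fun k _ => by ring

lemma aux_vecMulVec_mul_vecMulVec {n : ℕ} (a b c d : Fin n → ℝ) :
    vecMulVec a b * vecMulVec c d = (b ⬝ᵥ c) • vecMulVec a d := by
  ext i j
  simp only [mul_apply, vecMulVec_apply, Matrix.smul_apply, smul_eq_mul, dotProduct, Finset.sum_mul]
  exact Finset.sum_congr rfl fun k _ => by ring

lemma aux_trace_vecMulVec {n : ℕ} (a b : Fin n → ℝ) :
    (vecMulVec a b).trace = a ⬝ᵥ b := by
  simp [Matrix.trace, Matrix.diag, vecMulVec_apply, dotProduct]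

lemma aux_vecMulVec_mulVec {n : ℕ} (a b x : Fin n → ℝ) :
    vecMulVec a b *ᵥ x = (b ⬝ᵥ x) • a := by
  ext j
  simp only [mulVec, vecMulVec_apply, dotProduct, Pi.smul_apply, smul_eq_mul, Finset.sum_mul]
  exact Finset.sum_congr rfl fun k _ => by ring

lemma aux_psd_vecMulVec {n : ℕ} (u : Fin n → ℝ) : (vecMulVec u u).PosSemidef := by
  rw [posSemidef_iff_dotProduct_mulVec]; constructor
  · ext i j
    simp [vecMulVec_apply, conjTranspose_apply, mul_comm]
  · intro x
    rw [aux_vecMulVec_mulVec, dotProduct_smul, star_trivial]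
    rw [dotProduct_comm x u, smul_eq_mul]
    exact mul_self_nonneg _

lemma aux_dp_nonneg {n : ℕ} {M : Matrix (Fin n) (Fin n) ℝ} (hM : M.PosSemidef)
    (x : Fin n → ℝ) : 0 ≤ x ⬝ᵥ M *ᵥ x := by
  simpa using hM.dotProduct_mulVec_nonneg x

lemma aux_symm_dp {n : ℕ} {A : Matrix (Fin n) (Fin n) ℝ} (hA : A.IsHermitian)
    (x y : Fin n → ℝ) : x ⬝ᵥ A *ᵥ y = y ⬝ᵥ A *ᵥ x := by
  have ht : Aᵀ = A := by
    rw [← conjTranspose_eq_transpose_of_trivial]; exact hA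
  rw [dotProduct_mulVec, ← mulVec_transpose, ht, dotProduct_comm]

lemma aux_cs {n : ℕ} {A : Matrix (Fin n) (Fin n) ℝ} (hA : A.PosSemidef)
    (x y : Fin n → ℝ) : (x ⬝ᵥ A *ᵥ y) ^ 2 ≤ (x ⬝ᵥ A *ᵥ x) * (y ⬝ᵥ A *ᵥ y) := by
  set a := x ⬝ᵥ A *ᵥ x with ha
  set b := x ⬝ᵥ A *ᵥ y with hb
  set c := y ⬝ᵥ A *ᵥ y with hc
  have hkey : ∀ t : ℝ, 0 ≤ a + 2 * t * b + t ^ 2 * c := by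
    intro t
    have h0 := aux_dp_nonneg hA (x + t • y)
    have hyx : y ⬝ᵥ A *ᵥ x = b := aux_symm_dp hA.1 y x
    rw [mulVec_add, mulVec_smul, dotProduct_add, add_dotProduct, add_dotProduct,
      dotProduct_smul, smul_dotProduct, smul_dotProduct, dotProduct_smul] at h0
    simp only [smul_eq_mul, hyx, ← ha, ← hb, ← hc] at h0
    nlinarith [h0]
  have hc0 : 0 ≤ c := aux_dp_nonneg hA y
  have hd := discrim_le_zero (a := c) (b := 2 * b) (c := a)
    (fun t => by have := hkey t; nlinarith)
  rw [discrim] at hd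
  nlinarith

lemma aux_inv_anti {n : ℕ} {A B : Matrix (Fin n) (Fin n) ℝ} (hA : A.PosDef) (hB : B.PosDef)
    (h : ∀ x, x ⬝ᵥ A *ᵥ x ≤ x ⬝ᵥ B *ᵥ x) (w : Fin n → ℝ) :
    w ⬝ᵥ B⁻¹ *ᵥ w ≤ w ⬝ᵥ A⁻¹ *ᵥ w := by
  have hAu : IsUnit A.det := isUnit_iff_ne_zero.mpr hA.det_pos.ne'
  have hBu : IsUnit B.det := isUnit_iff_ne_zero.mpr hB.det_pos.ne'
  set u := B⁻¹ *ᵥ w with hu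
  have hBw : B *ᵥ u = w := by
    rw [hu, mulVec_mulVec, mul_nonsing_inv _ hBu, one_mulVec]
  set t := w ⬝ᵥ B⁻¹ *ᵥ w with ht
  have htu : u ⬝ᵥ w = t := by rw [ht, hu, dotProduct_comm]
  have ht0 : 0 ≤ t := aux_dp_nonneg (hB.inv.posSemidef) w
  set r := w ⬝ᵥ A⁻¹ *ᵥ w with hr
  have hr0 : 0 ≤ r := aux_dp_nonneg (hA.inv.posSemidef) w
  have hAinv : A *ᵥ (A⁻¹ *ᵥ w) = w := by
    rw [mulVec_mulVec, mul_nonsing_inv _ hAu, one_mulVec]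
  have hcs := aux_cs hA.posSemidef u (A⁻¹ *ᵥ w)
  rw [hAinv, htu] at hcs
  have hAr : (A⁻¹ *ᵥ w) ⬝ᵥ w = r := by
    rw [dotProduct_comm, hr]
  rw [hAr] at hcs
  have huA : u ⬝ᵥ A *ᵥ u ≤ t := by
    calc u ⬝ᵥ A *ᵥ u ≤ u ⬝ᵥ B *ᵥ u := h u
    _ = u ⬝ᵥ w := by rw [hBw]
    _ = t := htu
  have huA0 : 0 ≤ u ⬝ᵥ A *ᵥ u := aux_dp_nonneg hA.posSemidef u
  rcases eq_or_lt_of_le ht0 with h0 | h0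
  · rw [← h0]; exact hr0
  · nlinarith

lemma aux_sm {n : ℕ} (Wm : Matrix (Fin n) (Fin n) ℝ) (hWm : Wm.PosDef) (u : Fin n → ℝ) :
    (Wm + vecMulVec u u)⁻¹
      = Wm⁻¹ - (1 + u ⬝ᵥ Wm⁻¹ *ᵥ u)⁻¹ • vecMulVec (Wm⁻¹ *ᵥ u) (Wm⁻¹ *ᵥ u) := by
  have hdet : IsUnit Wm.det := isUnit_iff_ne_zero.mpr hWm.det_pos.ne'
  set M := Wm⁻¹ with hM
  set c := u ⬝ᵥ M *ᵥ u with hc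
  have hc0 : 0 ≤ c := aux_dp_nonneg hWm.inv.posSemidef u
  have h1c : (1 : ℝ) + c ≠ 0 := by linarith
  have hMsymm : Mᵀ = M := by
    rw [← conjTranspose_eq_transpose_of_trivial]
    exact hWm.inv.isHermitian
  apply Matrix.inv_eq_left_inv
  have e1 : M * Wm = 1 := nonsing_inv_mul _ hdet
  have e2 : vecMulVec (M *ᵥ u) (M *ᵥ u) * Wm = M * vecMulVec u u := by
    rw [aux_vecMulVec_mul, ← mulVec_transpose, mulVec_mulVec]
    have : Wmᵀ * M = 1 := by
      rw [← conjTranspose_eq_transpose_of_trivial, hWm.isHermitian.eq, hM,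
        mul_nonsing_inv _ hdet]
    rw [this, one_mulVec, aux_mul_vecMulVec]
  have e3 : vecMulVec (M *ᵥ u) (M *ᵥ u) * vecMulVec u u = c • (M * vecMulVec u u) := by
    rw [aux_vecMulVec_mul_vecMulVec, dotProduct_comm, ← hc, aux_mul_vecMulVec]
  have expand : (M - (1 + c)⁻¹ • vecMulVec (M *ᵥ u) (M *ᵥ u)) * (Wm + vecMulVec u u)
      = M * Wm + M * vecMulVec u u
        - (1 + c)⁻¹ • (vecMulVec (M *ᵥ u) (M *ᵥ u) * Wm)
        - (1 + c)⁻¹ • (vecMulVec (M *ᵥ u) (M *ᵥ u) * vecMulVec u u) := by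
    simp only [sub_mul, mul_add, Matrix.smul_mul]
    abel
  rw [expand, e1, e2, e3, smul_smul]
  have : M * vecMulVec u u - (1 + c)⁻¹ • (M * vecMulVec u u)
      - ((1 + c)⁻¹ * c) • (M * vecMulVec u u) = 0 := by
    nth_rewrite 1 [← one_smul ℝ (M * vecMulVec u u)]
    rw [← sub_smul, ← sub_smul]
    have : (1 : ℝ) - (1 + c)⁻¹ - (1 + c)⁻¹ * c = 0 := by
      field_simp
      ring
    rw [this, zero_smul]
  rw [add_sub_assoc, add_sub_assoc, this, add_zero]

lemma aux_trace_sm {n : ℕ} (Wm : Matrix (Fin n) (Fin n) ℝ) (hWm : Wm.PosDef) (u : Fin n → ℝ) :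
    (Wm⁻¹).trace - ((Wm + vecMulVec u u)⁻¹).trace
      = (1 + u ⬝ᵥ Wm⁻¹ *ᵥ u)⁻¹ * ((Wm⁻¹ *ᵥ u) ⬝ᵥ (Wm⁻¹ *ᵥ u)) := by
  rw [aux_sm Wm hWm u, trace_sub, trace_smul, aux_trace_vecMulVec, smul_eq_mul]
  ring

lemma aux_spectral_bounds {n : ℕ} {A : Matrix (Fin n) (Fin n) ℝ} (hA : A.IsHermitian)
    (x : Fin n → ℝ) :
    (⨅ i, hA.eigenvalues i) * (x ⬝ᵥ x) ≤ x ⬝ᵥ A *ᵥ x ∧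
      x ⬝ᵥ A *ᵥ x ≤ (⨆ i, hA.eigenvalues i) * (x ⬝ᵥ x) := by
  rcases Nat.eq_zero_or_pos n with hn | hn
  · subst hn
    simp [dotProduct, mulVec]
  haveI : Nonempty (Fin n) := ⟨⟨0, hn⟩⟩
  set U : Matrix (Fin n) (Fin n) ℝ := (hA.eigenvectorUnitary : Matrix (Fin n) (Fin n) ℝ) with hU
  have hstar : star U = Uᵀ := by
    rw [Matrix.star_eq_conjTranspose, conjTranspose_eq_transpose_of_trivial]
  set y : Fin n → ℝ := Uᵀ *ᵥ x with hy
  have hUU : U * Uᵀ = 1 := by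
    rw [← hstar]; exact (Matrix.mem_unitaryGroup_iff).mp hA.eigenvectorUnitary.2
  have hxU : x ᵥ* U = y := by rw [hy, mulVec_transpose]
  have hq : x ⬝ᵥ A *ᵥ x = ∑ i, hA.eigenvalues i * y i ^ 2 := by
    conv_lhs => rw [hA.spectral_theorem, Unitary.conjStarAlgAut_apply, ← hU]
    rw [hstar, mul_assoc, ← mulVec_mulVec, dotProduct_mulVec, hxU, ← mulVec_mulVec]
    simp only [dotProduct, mulVec_diagonal]
    exact Finset.sum_congr rfl fun i _ => by
      simp [Function.comp]; ring
  have hxx : x ⬝ᵥ x = ∑ i, y i ^ 2 := by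
    have h1 : y ⬝ᵥ y = (U *ᵥ y) ⬝ᵥ x := by
      nth_rewrite 2 [hy]
      rw [dotProduct_mulVec, ← mulVec_transpose Uᵀ y, transpose_transpose]
    have h2 : U *ᵥ y = x := by
      rw [hy, mulVec_mulVec, hUU, one_mulVec]
    have h3 : x ⬝ᵥ x = y ⬝ᵥ y := by rw [h1, h2]
    rw [h3]
    exact Finset.sum_congr rfl fun i _ => by rw [pow_two]
  have hbdd_above : BddAbove (Set.range hA.eigenvalues) := Set.Finite.bddAbove (Set.finite_range _)
  have hbdd_below : BddBelow (Set.range hA.eigenvalues) := Set.Finite.bddBelow (Set.finite_range _)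
  constructor
  · rw [hq, hxx, Finset.mul_sum]
    exact Finset.sum_le_sum fun i _ =>
      mul_le_mul_of_nonneg_right (ciInf_le hbdd_below i) (sq_nonneg _)
  · rw [hq, hxx, Finset.mul_sum]
    exact Finset.sum_le_sum fun i _ =>
      mul_le_mul_of_nonneg_right (le_ciSup hbdd_above i) (sq_nonneg _)

lemma aux_dp_self_nonneg {n : ℕ} (x : Fin n → ℝ) : 0 ≤ x ⬝ᵥ x :=
  Finset.sum_nonneg fun i _ => mul_self_nonneg _

/-- Let `W₀` be symmetric positive definite, `v : ι → ℝⁿ` a finite family, and for `T ⊆ ι` set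
`W(T) = W₀ + ∑_{e ∈ T} v_e v_eᵀ` and `E(T) = trace (W(T)⁻¹)`. With
`α = λ_min(W₀) / λ_max(W(ι))`, we have `α > 0` and `E` is `α`-supermodular:
`E(T_A) - E(T_A ∪ {e}) ≥ α (E(T_B) - E(T_B ∪ {e}))` for all `T_A ⊆ T_B` and `e ∉ T_B`. -/
theorem stmt_4 {n : ℕ} (hn : 0 < n) {ι : Type} [Fintype ι] [DecidableEq ι]
    (W₀ : Matrix (Fin n) (Fin n) ℝ) (hW₀ : W₀.PosDef) (v : ι → Fin n → ℝ)
    (W : Finset ι → Matrix (Fin n) (Fin n) ℝ)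
    (hW : ∀ T : Finset ι, W T = W₀ + ∑ e ∈ T, Matrix.vecMulVec (v e) (v e))
    (E : Finset ι → ℝ) (hE : ∀ T : Finset ι, E T = ((W T)⁻¹).trace)
    (hherm : (W Finset.univ).IsHermitian)
    (α : ℝ)
    (hα : α = (⨅ i : Fin n, hW₀.isHermitian.eigenvalues i) /
              (⨆ i : Fin n, hherm.eigenvalues i)) :
    0 < α ∧
      ∀ TA TB : Finset ι, TA ⊆ TB → ∀ e : ι, e ∉ TB →
        E TA - E (insert e TA) ≥ α * (E TB - E (insert e TB)) := by
  haveI : Nonempty (Fin n) := ⟨⟨0, hn⟩⟩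
  have hWpos : ∀ T : Finset ι, (W T).PosDef := by
    intro T
    rw [hW]
    exact hW₀.add_posSemidef
      (Finset.sum_induction _ _ (fun a b ha hb => ha.add hb) Matrix.PosSemidef.zero
        (fun e _ => aux_psd_vecMulVec (v e)))
  have hWe : W ∅ = W₀ := by simp [hW]
  have hmono : ∀ {S T : Finset ι}, S ⊆ T → ∀ x, x ⬝ᵥ W S *ᵥ x ≤ x ⬝ᵥ W T *ᵥ x := by
    intro S T hST x
    have hsum : W T = W S + ∑ e ∈ T \ S, vecMulVec (v e) (v e) := by
      rw [hW, hW, ← Finset.sum_sdiff hST]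
      abel
    rw [hsum, add_mulVec, dotProduct_add]
    have h0 : 0 ≤ x ⬝ᵥ (∑ e ∈ T \ S, vecMulVec (v e) (v e)) *ᵥ x :=
      aux_dp_nonneg
        (Finset.sum_induction _ _ (fun a b ha hb => ha.add hb) Matrix.PosSemidef.zero
          (fun e _ => aux_psd_vecMulVec (v e))) x
    linarith
  set m := ⨅ i, hW₀.isHermitian.eigenvalues i with hm_def
  set Mx := ⨆ i, hherm.eigenvalues i with hMx_def
  have hm : 0 < m := by
    obtain ⟨i, hi⟩ := exists_eq_ciInf_of_finite (f := hW₀.isHermitian.eigenvalues)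
    rw [hm_def, ← hi]
    exact hW₀.eigenvalues_pos i
  have hMx : 0 < Mx := by
    obtain ⟨i, hi⟩ := exists_eq_ciSup_of_finite (f := hherm.eigenvalues)
    rw [hMx_def, ← hi]
    exact (hWpos Finset.univ).eigenvalues_pos i
  refine ⟨by rw [hα]; exact div_pos hm hMx, ?_⟩
  intro TA TB hsub e he
  have heA : e ∉ TA := fun h => he (hsub h)
  set u := v e with hu
  have hiA : W (insert e TA) = W TA + vecMulVec u u := by
    rw [hW, hW, Finset.sum_insert heA]
    abel
  have hiB : W (insert e TB) = W TB + vecMulVec u u := by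
    rw [hW, hW, Finset.sum_insert he]
    abel
  have hA := hWpos TA
  have hB := hWpos TB
  set a1 := u ⬝ᵥ (W TA)⁻¹ *ᵥ u with ha1_def
  set a2 := ((W TA)⁻¹ *ᵥ u) ⬝ᵥ ((W TA)⁻¹ *ᵥ u) with ha2_def
  set b1 := u ⬝ᵥ (W TB)⁻¹ *ᵥ u with hb1_def
  set b2 := ((W TB)⁻¹ *ᵥ u) ⬝ᵥ ((W TB)⁻¹ *ᵥ u) with hb2_def
  have hdiffA : E TA - E (insert e TA) = (1 + a1)⁻¹ * a2 := by
    rw [hE, hE, hiA]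
    exact aux_trace_sm (W TA) hA u
  have hdiffB : E TB - E (insert e TB) = (1 + b1)⁻¹ * b2 := by
    rw [hE, hE, hiB]
    exact aux_trace_sm (W TB) hB u
  have ha1 : 0 ≤ a1 := aux_dp_nonneg hA.inv.posSemidef u
  have hb1 : 0 ≤ b1 := aux_dp_nonneg hB.inv.posSemidef u
  have ha2 : 0 ≤ a2 := aux_dp_self_nonneg _
  have hb2 : 0 ≤ b2 := aux_dp_self_nonneg _
  have hba : b1 ≤ a1 := aux_inv_anti hA hB (hmono hsub) u
  -- a1 ≤ Mx * a2
  have hkeyA : a1 ≤ Mx * a2 := by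
    set w := (W TA)⁻¹ *ᵥ u with hw_def
    have hw : W TA *ᵥ w = u := by
      rw [hw_def, mulVec_mulVec, mul_nonsing_inv _ (isUnit_iff_ne_zero.mpr hA.det_pos.ne'),
        one_mulVec]
    have h1 : w ⬝ᵥ W TA *ᵥ w = a1 := by rw [hw, dotProduct_comm]
    have h2 : w ⬝ᵥ W TA *ᵥ w ≤ w ⬝ᵥ W Finset.univ *ᵥ w := hmono (Finset.subset_univ TA) w
    have h3 := (aux_spectral_bounds hherm w).2
    rw [h1] at h2
    calc a1 ≤ w ⬝ᵥ W Finset.univ *ᵥ w := h2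
    _ ≤ Mx * (w ⬝ᵥ w) := h3
    _ = Mx * a2 := rfl
  -- m * b2 ≤ b1
  have hkeyB : m * b2 ≤ b1 := by
    set w := (W TB)⁻¹ *ᵥ u with hw_def
    have hw : W TB *ᵥ w = u := by
      rw [hw_def, mulVec_mulVec, mul_nonsing_inv _ (isUnit_iff_ne_zero.mpr hB.det_pos.ne'),
        one_mulVec]
    have h1 : w ⬝ᵥ W TB *ᵥ w = b1 := by rw [hw, dotProduct_comm]
    have h2 : w ⬝ᵥ W₀ *ᵥ w ≤ w ⬝ᵥ W TB *ᵥ w := by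
      have := hmono (Finset.empty_subset TB) w
      rwa [hWe] at this
    have h3 := (aux_spectral_bounds hW₀.isHermitian w).1
    rw [h1] at h2
    calc m * b2 = m * (w ⬝ᵥ w) := rfl
    _ ≤ w ⬝ᵥ W₀ *ᵥ w := h3
    _ ≤ b1 := h2
  rw [hdiffA, hdiffB, hα, ge_iff_le, inv_mul_eq_div, inv_mul_eq_div, div_mul_div_comm,
    div_le_div_iff₀ (by positivity) (by positivity)]
  nlinarith [mul_nonneg (sub_nonneg.mpr hkeyB) ha1,
    mul_nonneg (sub_nonneg.mpr hkeyA) (by linarith : (0:ℝ) ≤ 1 + b1),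
    mul_nonneg hb1 ha1]
end

section
/- Let (U, I) be a matroid on a finite ground set U, and let E : 2^U → ℝ be a set function that is nonincreasing (E(T') ≤ E(T) whenever T ⊆ T' ⊆ U) and α-supermodular for some α > 0. Define the greedy sequence by G^(0) = ∅ and, as long as the set F_r = {e ∈ U \ G^(r) : G^(r) ∪ {e} ∈ I} is nonempty, G^(r+1) = G^(r) ∪ {e_r} where e_r is any minimizer of E(G^(r) ∪ {e}) over e ∈ F_r; let G be the final set when F_r = ∅. Then, with β = min(α/2, α/(1+α)) and E* = min_{T ∈ I} E(T), the greedy output satisfies E(G) ≤ (1 − β) E(∅) + β E*. -/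
open Finset

/-- Greedy guarantee on a matroid: if `(U, Ind)` is a matroid, `E` is nonincreasing and
`α`-supermodular with `α > 0`, and the greedy sequence `G^(0) = ∅`,
`G^(r+1) = G^(r) ∪ {e_r}` (with `e_r` a feasible element minimizing `E(G^(r) ∪ {e})`) is run
until no feasible element remains (at step `R`), then with `β = min (α/2) (α/(1+α))` and
`E* = min_{T ∈ Ind} E(T)`, the output satisfies `E(G^(R)) ≤ (1-β) E(∅) + β E*`. -/
theorem stmt_6 {U : Type} [Fintype U] [DecidableEq U]
    (Ind : Finset U → Prop)
    (hIempty : Ind ∅)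
    (hIdown : ∀ A B : Finset U, A ⊆ B → Ind B → Ind A)
    (hIexch : ∀ A B : Finset U, Ind A → Ind B → A.card < B.card →
      ∃ e ∈ B \ A, Ind (insert e A))
    (E : Finset U → ℝ)
    (hmono : ∀ T T' : Finset U, T ⊆ T' → E T' ≤ E T)
    (α : ℝ) (hα : 0 < α)
    (hsuper : ∀ A B : Finset U, A ⊆ B → ∀ e : U, e ∉ B →
      E A - E (insert e A) ≥ α * (E B - E (insert e B)))
    (G : ℕ → Finset U) (hG0 : G 0 = ∅) (R : ℕ)
    (hrun : ∀ r < R, ∃ e : U, e ∉ G r ∧ Ind (insert e (G r)) ∧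
      G (r + 1) = insert e (G r) ∧
      ∀ e' : U, e' ∉ G r → Ind (insert e' (G r)) →
        E (insert e (G r)) ≤ E (insert e' (G r)))
    (hstop : ¬ ∃ e : U, e ∉ G R ∧ Ind (insert e (G R)))
    (Estar : ℝ) (hEstar : IsLeast {x : ℝ | ∃ T : Finset U, Ind T ∧ E T = x} Estar) :
    E (G R) ≤ (1 - min (α / 2) (α / (1 + α))) * E ∅
      + min (α / 2) (α / (1 + α)) * Estar := by
  -- Basic facts about the greedy sequence
  have key : ∀ r, r ≤ R → Ind (G r) ∧ (G r).card = r := by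
    intro r
    induction r with
    | zero => intro _; simp [hG0, hIempty]
    | succ n ih =>
      intro hr
      obtain ⟨hI, hc⟩ := ih (Nat.le_of_succ_le hr)
      obtain ⟨e, he, hInd, hEq, _⟩ := hrun n (Nat.lt_of_succ_le hr)
      rw [hEq]
      exact ⟨hInd, by rw [Finset.card_insert_of_notMem he, hc]⟩
  have hstep_sub : ∀ r, r < R → G r ⊆ G (r + 1) := by
    intro r hr
    obtain ⟨e, _, _, hEq, _⟩ := hrun r hr
    rw [hEq]
    exact Finset.subset_insert _ _
  have hGle : ∀ r s, r ≤ s → s ≤ R → G r ⊆ G s := by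
    intro r s hrs
    induction s, hrs using Nat.le_induction with
    | base => intro _; exact subset_rfl
    | succ n hn ih =>
      intro hnR
      exact (ih (by omega)).trans (hstep_sub n (by omega))
  have hIndGR : Ind (G R) := (key R le_rfl).1
  have hcardGR : (G R).card = R := (key R le_rfl).2
  -- Main induction
  have Q : ∀ r, r ≤ R → ∀ T' : Finset U, Ind T' → T'.card = r →
      α * (E (G R) - E (G R ∪ T')) ≤ E ∅ - E (G r) := by
    intro r
    induction r with
    | zero =>
      intro _ T' _ hcard
      rw [Finset.card_eq_zero.mp hcard, Finset.union_empty, hG0]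
      simp
    | succ n ih =>
      intro hr T' hT' hcard
      have hGn : Ind (G n) := (key n (by omega)).1
      have hGnc : (G n).card = n := (key n (by omega)).2
      obtain ⟨e, hemem, hIe⟩ := hIexch (G n) T' hGn hT' (by omega)
      have heT' : e ∈ T' := (Finset.mem_sdiff.mp hemem).1
      have heGn : e ∉ G n := (Finset.mem_sdiff.mp hemem).2
      set T'' := T'.erase e with hT''def
      have hT''sub : T'' ⊆ T' := Finset.erase_subset _ _
      have hT''Ind : Ind T'' := hIdown _ _ hT''sub hT'
      have hT''card : T''.card = n := by
        rw [hT''def, Finset.card_erase_of_mem heT', hcard]; omega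
      have ihh := ih (by omega) T'' hT''Ind hT''card
      have hT'eq : T' = insert e T'' := by
        rw [hT''def, Finset.insert_erase heT']
      have hunion : G R ∪ T' = insert e (G R ∪ T'') := by
        rw [hT'eq, Finset.union_insert]
      have hmonostep : E (G (n + 1)) ≤ E (G n) :=
        hmono _ _ (hstep_sub n (by omega))
      by_cases heGR : e ∈ G R
      · have : G R ∪ T' = G R ∪ T'' := by
          rw [hunion, Finset.insert_eq_self.mpr (Finset.mem_union_left _ heGR)]
        rw [this]
        linarith
      · -- e ∉ G R
        have heB : e ∉ G R ∪ T'' := by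
          simp only [Finset.mem_union]
          rintro (h | h)
          · exact heGR h
          · exact (Finset.notMem_erase e T') h
        have hsub : G n ⊆ G R ∪ T'' :=
          (hGle n R (by omega) le_rfl).trans Finset.subset_union_left
        have hsup := hsuper (G n) (G R ∪ T'') hsub e heB
        -- greedy step
        obtain ⟨g, hg, hgInd, hGeq, hgmin⟩ := hrun n (by omega)
        have hgreedy : E (G (n + 1)) ≤ E (insert e (G n)) := by
          rw [hGeq]; exact hgmin e heGn hIe
        have h1 : α * (E (G R) - E (G R ∪ T')) =
            α * (E (G R) - E (G R ∪ T'')) +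
            α * (E (G R ∪ T'') - E (G R ∪ T')) := by ring
        rw [hunion] at h1 ⊢
        linarith [hsup, ihh, hgreedy, h1]
  -- The optimal set, extended to a set of size R
  obtain ⟨T0, hT0, hET0⟩ := hEstar.1
  have hT0le : T0.card ≤ R := by
    by_contra h
    push_neg at h
    obtain ⟨e, he, hIe⟩ := hIexch (G R) T0 hIndGR hT0 (by omega)
    exact hstop ⟨e, (Finset.mem_sdiff.mp he).2, hIe⟩
  have hext : ∀ n : ℕ, ∀ T : Finset U, Ind T → T.card + n = R →
      ∃ T' : Finset U, Ind T' ∧ T'.card = R ∧ E T' ≤ E T := by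
    intro n
    induction n with
    | zero => intro T hT hc; exact ⟨T, hT, by omega, le_rfl⟩
    | succ m ihm =>
      intro T hT hc
      obtain ⟨e, he, hIe⟩ := hIexch T (G R) hT hIndGR (by omega)
      have hen : e ∉ T := (Finset.mem_sdiff.mp he).2
      obtain ⟨T', h1, h2, h3⟩ := ihm (insert e T) hIe
        (by rw [Finset.card_insert_of_notMem hen]; omega)
      exact ⟨T', h1, h2, h3.trans (hmono T (insert e T) (Finset.subset_insert _ _))⟩
  obtain ⟨Tstar, hTstar, hTcard, hTE⟩ := hext (R - T0.card) T0 hT0 (by omega)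
  have hQR := Q R le_rfl Tstar hTstar hTcard
  have hEunion : E (G R ∪ Tstar) ≤ Estar := by
    calc E (G R ∪ Tstar) ≤ E Tstar := hmono _ _ Finset.subset_union_right
    _ ≤ E T0 := hTE
    _ = Estar := hET0
  have hEstarle : Estar ≤ E ∅ := hEstar.2 ⟨∅, hIempty, rfl⟩
  have h1α : (0:ℝ) < 1 + α := by linarith
  -- (1+α) E(G R) ≤ E ∅ + α Estar
  have key2 : (1 + α) * E (G R) ≤ E ∅ + α * Estar := by
    nlinarith [hQR, hEunion, hα.le]
  have hEGR : E (G R) ≤ (1 - α / (1 + α)) * E ∅ + (α / (1 + α)) * Estar := by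
    have heq : (1 - α / (1 + α)) * E ∅ + (α / (1 + α)) * Estar
        = (E ∅ + α * Estar) / (1 + α) := by
      field_simp
      ring
    rw [heq, le_div_iff₀ h1α]
    linarith [key2]
  set β := min (α / 2) (α / (1 + α)) with hβ
  have hβle : β ≤ α / (1 + α) := min_le_right _ _
  have hprod : (0:ℝ) ≤ (α / (1 + α) - β) * (E ∅ - Estar) :=
    mul_nonneg (by linarith) (by linarith)
  nlinarith [hEGR, hprod]
end

section
/- Let W̃ and Ŵ be n×n real symmetric positive semidefinite matrices with rank(W̃) = R and rank(Ŵ) = R + 1. Then there exists ε* > 0 such that for every ε with 0 < ε < ε*, trace((Ŵ + εI)⁻¹) < trace((W̃ + εI)⁻¹). -/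
open Matrix Finset

lemma trace_inv_eq {n : ℕ} (W : Matrix (Fin n) (Fin n) ℝ) (hW : W.PosSemidef)
    {ε : ℝ} (hε : 0 < ε) :
    ((W + ε • (1 : Matrix (Fin n) (Fin n) ℝ))⁻¹).trace
      = ∑ i, (hW.1.eigenvalues i + ε)⁻¹ := by
  classical
  set U : Matrix (Fin n) (Fin n) ℝ := (hW.1.eigenvectorUnitary : Matrix (Fin n) (Fin n) ℝ) with hU
  have hUU : star U * U = 1 := Unitary.coe_star_mul_self _
  have hUU' : U * star U = 1 := Unitary.coe_mul_star_self _
  set d : Fin n → ℝ := fun i => hW.1.eigenvalues i + ε with hd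
  have hdpos : ∀ i, 0 < d i := fun i => add_pos_of_nonneg_of_pos (hW.eigenvalues_nonneg i) hε
  have hdecomp : W + ε • (1 : Matrix (Fin n) (Fin n) ℝ) = U * diagonal d * star U := by
    have h1 : (ε • (1 : Matrix (Fin n) (Fin n) ℝ)) = U * (ε • 1) * star U := by
      rw [mul_smul_comm, mul_one, smul_mul_assoc, hUU']
    have h0 := hW.1.spectral_theorem
    rw [h0, Unitary.conjStarAlgAut_apply, ← hU, h1]
    have : (ε • (1 : Matrix (Fin n) (Fin n) ℝ)) = diagonal (fun _ => ε) := by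
      ext i j
      simp [Matrix.diagonal, Matrix.one_apply]
    rw [this, ← Matrix.add_mul, ← Matrix.mul_add, diagonal_add]
    rfl
  have hinv : (W + ε • (1 : Matrix (Fin n) (Fin n) ℝ))⁻¹ = U * diagonal (fun i => (d i)⁻¹) * star U := by
    apply Matrix.inv_eq_right_inv
    rw [hdecomp]
    calc U * diagonal d * star U * (U * diagonal (fun i => (d i)⁻¹) * star U)
        = U * diagonal d * (star U * U) * diagonal (fun i => (d i)⁻¹) * star U := by
          simp only [Matrix.mul_assoc]
      _ = U * (diagonal d * diagonal (fun i => (d i)⁻¹)) * star U := by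
          rw [hUU]; simp only [Matrix.mul_assoc, Matrix.one_mul]
      _ = 1 := by
          rw [diagonal_mul_diagonal]
          have : (fun i => d i * (d i)⁻¹) = fun _ => (1:ℝ) := by
            funext i; exact mul_inv_cancel₀ (hdpos i).ne'
          rw [this, diagonal_one, Matrix.mul_one, hUU']
  rw [hinv, Matrix.trace_mul_cycle, hUU, Matrix.one_mul, trace_diagonal]

/-- If `W̃` and `Ŵ` are symmetric positive semidefinite with `rank W̃ = R` and
`rank Ŵ = R + 1`, then there is `ε* > 0` such that for all `0 < ε < ε*`,
`trace ((Ŵ + ε I)⁻¹) < trace ((W̃ + ε I)⁻¹)`. -/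
theorem stmt_7 {n : ℕ} (Wt Wh : Matrix (Fin n) (Fin n) ℝ)
    (hWt : Wt.PosSemidef) (hWh : Wh.PosSemidef) (R : ℕ)
    (hrt : Wt.rank = R) (hrh : Wh.rank = R + 1) :
    ∃ εstar > (0 : ℝ), ∀ ε : ℝ, 0 < ε → ε < εstar →
      ((Wh + ε • (1 : Matrix (Fin n) (Fin n) ℝ))⁻¹).trace
        < ((Wt + ε • (1 : Matrix (Fin n) (Fin n) ℝ))⁻¹).trace := by
  classical
  set lt := hWt.1.eigenvalues with hlt
  set lh := hWh.1.eigenvalues with hlh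
  have hcardt : (univ.filter fun i => lt i ≠ 0).card = R := by
    have h := hWt.1.rank_eq_card_non_zero_eigs
    rw [hrt, Fintype.card_subtype] at h
    exact h.symm
  have hcardh : (univ.filter fun i => lh i ≠ 0).card = R + 1 := by
    have h := hWh.1.rank_eq_card_non_zero_eigs
    rw [hrh, Fintype.card_subtype] at h
    exact h.symm
  have hRn : R + 1 ≤ n := by
    rw [← hcardh]
    simpa using Finset.card_filter_le univ (fun i => lh i ≠ 0)
  have hcardt0 : (univ.filter fun i => lt i = 0).card = n - R := by
    have h := Finset.card_filter_add_card_filter_not (s := univ)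
      (p := fun i => lt i ≠ 0)
    simp only [Finset.card_univ, Fintype.card_fin, hcardt, not_not] at h
    omega
  have hcardh0 : (univ.filter fun i => lh i = 0).card = n - (R + 1) := by
    have h := Finset.card_filter_add_card_filter_not (s := univ)
      (p := fun i => lh i ≠ 0)
    simp only [Finset.card_univ, Fintype.card_fin, hcardh, not_not] at h
    omega
  set C : ℝ := ∑ i ∈ univ.filter (fun i => lh i ≠ 0), (lh i)⁻¹ with hC
  have hC0 : 0 ≤ C :=
    Finset.sum_nonneg fun i _ => inv_nonneg.2 (hWh.eigenvalues_nonneg i)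
  refine ⟨(C + 1)⁻¹, by positivity, fun ε hε hεlt => ?_⟩
  rw [trace_inv_eq Wt hWt hε, trace_inv_eq Wh hWh hε]
  have hCe : C < ε⁻¹ := by
    have h1 : C + 1 < ε⁻¹ := by
      rw [← inv_inv (C + 1)]
      exact inv_strictAnti₀ hε hεlt
    linarith
  have hlow : ((n - R : ℕ) : ℝ) * ε⁻¹ ≤ ∑ i, (lt i + ε)⁻¹ := by
    have h1 : ∑ i ∈ univ.filter (fun i => lt i = 0), (lt i + ε)⁻¹
        ≤ ∑ i, (lt i + ε)⁻¹ := by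
      apply Finset.sum_le_sum_of_subset_of_nonneg (Finset.filter_subset _ _)
      intro i _ _
      exact inv_nonneg.2 (by linarith [hWt.eigenvalues_nonneg i])
    have h2 : ∑ i ∈ univ.filter (fun i => lt i = 0), (lt i + ε)⁻¹
        = ((n - R : ℕ) : ℝ) * ε⁻¹ := by
      have he : ∀ i ∈ univ.filter (fun i => lt i = 0), (lt i + ε)⁻¹ = ε⁻¹ := by
        intro i hi
        rw [Finset.mem_filter] at hi
        rw [hi.2, zero_add]
      rw [Finset.sum_congr rfl he, Finset.sum_const, hcardt0, nsmul_eq_mul]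
    linarith
  have hup : ∑ i, (lh i + ε)⁻¹ ≤ ((n - (R + 1) : ℕ) : ℝ) * ε⁻¹ + C := by
    rw [← Finset.sum_filter_add_sum_filter_not univ (fun i => lh i = 0)]
    have h2 : ∑ i ∈ univ.filter (fun i => lh i = 0), (lh i + ε)⁻¹
        = ((n - (R + 1) : ℕ) : ℝ) * ε⁻¹ := by
      have he : ∀ i ∈ univ.filter (fun i => lh i = 0), (lh i + ε)⁻¹ = ε⁻¹ := by
        intro i hi
        rw [Finset.mem_filter] at hi
        rw [hi.2, zero_add]
      rw [Finset.sum_congr rfl he, Finset.sum_const, hcardh0, nsmul_eq_mul]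
    have h3 : ∑ i ∈ univ.filter (fun i => ¬ lh i = 0), (lh i + ε)⁻¹ ≤ C := by
      apply Finset.sum_le_sum
      intro i hi
      rw [Finset.mem_filter] at hi
      have hpos : 0 < lh i := lt_of_le_of_ne (hWh.eigenvalues_nonneg i) (Ne.symm hi.2)
      exact inv_anti₀ hpos (by linarith)
    rw [h2]
    linarith
  have hnsub : ((n - R : ℕ) : ℝ) = ((n - (R + 1) : ℕ) : ℝ) + 1 := by
    have : n - R = (n - (R + 1)) + 1 := by omega
    rw [this]; push_cast; ring
  rw [hnsub] at hlow
  nlinarith [hεlt, hε]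
end
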